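/- arXiv:2501.13202 — 2 statements merged into one kernel-verified Lean document; each statement's English description precedes it below -/
import Mathlib

section
/- Let (X,d) be a distance space such that (T_d,d∞) is a metric space (T_d is non-empty and d∞(f,g) < ∞ for all f,g ∈ T_d). Then for each z ∈ X the subspace (κ(z),d∞) is non-empty, hyperconvex, complete and geodesic. -/
open scoped ENNReal

section CoreDefs

variable {Y : Type*}

/-- A distance space: symmetric, nonnegative, vanishing on the diagonal. -/
def IsDistance (d : Y → Y → ℝ) : Prop :=
  (∀ x y, 0 ≤ d x y) ∧ (∀ x y, d x y = d y x) ∧ ∀ x, d x x = 0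

/-- The set `P_d` of functions dominating the distance `d`. -/
def Pd (d : Y → Y → ℝ) : Set (Y → ℝ) :=
  {f | ∀ x y, d x y ≤ f x + f y}

/-- The tight span `T_d`: pointwise-minimal elements of `P_d`. -/
def Td (d : Y → Y → ℝ) : Set (Y → ℝ) :=
  {f | f ∈ Pd d ∧ ∀ g ∈ Pd d, g ≤ f → g = f}

/-- The sup-distance `d∞(f,g) = sup_x |f x - g x|`, valued in `[0,∞]`. -/
noncomputable def dInfty (f g : Y → ℝ) : ℝ≥0∞ :=
  ⨆ y, edist (f y) (g y)

/-- `κ(x) = {f ∈ T_d : f x = 0}`. -/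
def kappa (d : Y → Y → ℝ) (x : Y) : Set (Y → ℝ) :=
  {f | f ∈ Td d ∧ f x = 0}

/-- A pseudometric: symmetric, nonnegative, vanishing on the diagonal,
satisfying the triangle inequality. -/
def IsPseudometric (ρ : Y → Y → ℝ) : Prop :=
  (∀ x y, 0 ≤ ρ x y) ∧ (∀ x y, ρ x y = ρ y x) ∧ (∀ x, ρ x x = 0) ∧
  ∀ x y z, ρ x z ≤ ρ x y + ρ y z

/-- `M(d)`: the set of pseudometrics dominating `d`. -/
def Md (d : Y → Y → ℝ) : Set (Y → Y → ℝ) :=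
  {ρ | IsPseudometric ρ ∧ ∀ x y, d x y ≤ ρ x y}

end CoreDefs

section SetConvDefs

variable {Y : Type*}

/-- A subset `S` is complete for the distance `ρ`:
every Cauchy sequence in `S` converges to a point of `S`. -/
def CompleteOn (ρ : Y → Y → ℝ) (S : Set Y) : Prop :=
  ∀ u : ℕ → Y, (∀ n, u n ∈ S) →
    (∀ ε : ℝ, 0 < ε → ∃ N : ℕ, ∀ m ≥ N, ∀ n ≥ N, ρ (u m) (u n) < ε) →
    ∃ l ∈ S, ∀ ε : ℝ, 0 < ε → ∃ N : ℕ, ∀ n ≥ N, ρ (u n) l < ε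

/-- A subset `S` is geodesic for the distance `ρ`: any two points of `S` are
joined by an isometric image of a real segment lying inside `S`. -/
def GeodesicOn (ρ : Y → Y → ℝ) (S : Set Y) : Prop :=
  ∀ a ∈ S, ∀ b ∈ S, ∃ g : ℝ → Y, g 0 = a ∧ g (ρ a b) = b ∧
    (∀ t ∈ Set.Icc (0 : ℝ) (ρ a b), g t ∈ S) ∧
    ∀ s ∈ Set.Icc (0 : ℝ) (ρ a b), ∀ t ∈ Set.Icc (0 : ℝ) (ρ a b),
      ρ (g s) (g t) = |s - t|

/-- A subset `S` is hyperconvex for the distance `ρ`. -/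
def HyperconvexOn (ρ : Y → Y → ℝ) (S : Set Y) : Prop :=
  ∀ (ι : Type*) (y : ι → Y), (∀ α, y α ∈ S) → ∀ r : ι → ℝ, (∀ α, 0 ≤ r α) →
    (∀ α β, ρ (y α) (y β) ≤ r α + r β) → ∃ z ∈ S, ∀ α, ρ (y α) z ≤ r α

end SetConvDefs

section Helpers
variable {X : Type*} {d : X → X → ℝ}

lemma zorn_min {α : Type*} [Preorder α] (s : Set α)
    (ih : ∀ c ⊆ s, IsChain (· ≤ ·) c → ∀ y ∈ c, ∃ lb ∈ s, ∀ z ∈ c, lb ≤ z)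
    (x : α) (hxs : x ∈ s) : ∃ m, m ≤ x ∧ Minimal (· ∈ s) m :=
  @zorn_le_nonempty₀ αᵒᵈ _ s (fun c cS hc y yc => ih c cS hc.symm y yc) x hxs

lemma pd_nonneg (hd : IsDistance d) {f : X → ℝ} (hf : f ∈ Pd d) (x : X) : 0 ≤ f x := by
  have := hf x x
  rw [hd.2.2 x] at this
  linarith

lemma td_eps (hd : IsDistance d) {f : X → ℝ} (hf : f ∈ Td d) (x : X) {ε : ℝ} (hε : 0 < ε) :
    ∃ y, f x + f y < d x y + ε := by
  classical
  by_contra hcon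
  push_neg at hcon
  set g := Function.update f x (f x - ε / 2) with hg
  have hgx : g x = f x - ε / 2 := Function.update_self _ _ _
  have hgne : ∀ u, u ≠ x → g u = f u := fun u hu => Function.update_of_ne hu _ _
  have hgPd : g ∈ Pd d := by
    intro u v
    rcases eq_or_ne u x with rfl | hu
    · rcases eq_or_ne v u with rfl | hv
      · have := hcon v
        rw [hd.2.2 v] at this ⊢
        rw [hgx]; linarith
      · rw [hgx, hgne v hv]
        have := hcon v
        linarith
    · rcases eq_or_ne v x with rfl | hv
      · rw [hgx, hgne u hu]
        have := hcon u
        have hsym : d u v = d v u := hd.2.1 u v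
        rw [hsym]; linarith
      · rw [hgne u hu, hgne v hv]; exact hf.1 u v
  have hle : g ≤ f := by
    intro u
    rcases eq_or_ne u x with rfl | hu
    · rw [hgx]; linarith
    · rw [hgne u hu]
  have := hf.2 g hgPd hle
  have : g x = f x := by rw [this]
  rw [hgx] at this; linarith

lemma td_of_eps {f : X → ℝ} (hf : f ∈ Pd d) (h : ∀ x, ∀ ε : ℝ, 0 < ε → ∃ y, f x + f y < d x y + ε) :
    f ∈ Td d := by
  refine ⟨hf, fun g hg hgf => ?_⟩
  funext x
  refine le_antisymm (hgf x) ?_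
  refine le_of_forall_pos_le_add fun ε hε => ?_
  obtain ⟨y, hy⟩ := h x ε hε
  have h1 : d x y ≤ g x + g y := hg x y
  have h2 : g y ≤ f y := hgf y
  linarith

/-- Existence of a minimal element of `Pd` below a given one. -/
lemma exists_td_le (hd : IsDistance d) {g : X → ℝ} (hg : g ∈ Pd d) :
    ∃ f ∈ Td d, f ≤ g := by
  have ih : ∀ c ⊆ {h : X → ℝ | h ∈ Pd d ∧ h ≤ g}, IsChain (· ≤ ·) c →
      ∀ y ∈ c, ∃ lb ∈ {h : X → ℝ | h ∈ Pd d ∧ h ≤ g}, ∀ z ∈ c, lb ≤ z := by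
    intro c hcs hchain y hyc
    have hne : ∀ x, ((fun h : X → ℝ => h x) '' c).Nonempty := fun x => ⟨y x, y, hyc, rfl⟩
    have hbdd : ∀ x, BddBelow ((fun h : X → ℝ => h x) '' c) := by
      intro x
      exact ⟨0, by rintro _ ⟨h, hc, rfl⟩; exact pd_nonneg hd (hcs hc).1 x⟩
    have hlble : ∀ h ∈ c, (fun x => sInf ((fun h : X → ℝ => h x) '' c)) ≤ h :=
      fun h hc x => csInf_le (hbdd x) ⟨h, hc, rfl⟩
    refine ⟨fun x => sInf ((fun h : X → ℝ => h x) '' c),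
      ⟨?_, le_trans (hlble y hyc) (hcs hyc).2⟩, hlble⟩
    intro u v
    refine le_of_forall_pos_le_add fun ε hε => ?_
    have hhalf : (0:ℝ) < ε / 2 := by linarith
    obtain ⟨_, ⟨h1, hc1, rfl⟩, hlt1⟩ := (csInf_lt_iff (hbdd u) (hne u)).1
      (lt_add_of_pos_right (sInf ((fun h : X → ℝ => h u) '' c)) hhalf)
    obtain ⟨_, ⟨h2, hc2, rfl⟩, hlt2⟩ := (csInf_lt_iff (hbdd v) (hne v)).1
      (lt_add_of_pos_right (sInf ((fun h : X → ℝ => h v) '' c)) hhalf)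
    rcases hchain.total hc1 hc2 with hle | hle
    · have hduv := (hcs hc1).1 u v
      have h2v := hle v
      simp only at hlt1 hlt2
      linarith
    · have hduv := (hcs hc2).1 u v
      have h1u := hle u
      simp only at hlt1 hlt2
      linarith
  obtain ⟨m, hmg, hm⟩ := zorn_min {h : X → ℝ | h ∈ Pd d ∧ h ≤ g} ih g ⟨hg, le_rfl⟩
  refine ⟨m, ⟨hm.1.1, fun p hp hpm => ?_⟩, hm.1.2⟩
  exact le_antisymm hpm (hm.2 ⟨hp, le_trans hpm hm.1.2⟩ hpm)

lemma edist_real (a b : ℝ) : edist a b = ENNReal.ofReal |a - b| := by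
  rw [edist_dist, Real.dist_eq]

lemma dInfty_le_ofReal {f g : X → ℝ} {c : ℝ} (h : ∀ x, |f x - g x| ≤ c) :
    dInfty f g ≤ ENNReal.ofReal c :=
  iSup_le fun x => by rw [edist_real]; exact ENNReal.ofReal_le_ofReal (h x)

lemma toReal_dInfty_le {f g : X → ℝ} {c : ℝ} (hc : 0 ≤ c) (h : ∀ x, |f x - g x| ≤ c) :
    (dInfty f g).toReal ≤ c :=
  ENNReal.toReal_le_of_le_ofReal hc (dInfty_le_ofReal h)

lemma abs_le_toReal_dInfty {f g : X → ℝ} (hfin : dInfty f g ≠ ⊤) (x : X) :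
    |f x - g x| ≤ (dInfty f g).toReal := by
  have h1 : edist (f x) (g x) ≤ dInfty f g := le_iSup (fun y => edist (f y) (g y)) x
  have h2 := ENNReal.toReal_mono hfin h1
  rwa [edist_real, ENNReal.toReal_ofReal (abs_nonneg _)] at h2

lemma dInfty_comm (f g : X → ℝ) : dInfty f g = dInfty g f := by
  unfold dInfty; simp [edist_comm]

lemma dInfty_self (f : X → ℝ) : dInfty f f = 0 := by
  unfold dInfty; simp

lemma eq_of_dInfty_zero {f g : X → ℝ} (hfin : dInfty f g ≠ ⊤)
    (h : (dInfty f g).toReal = 0) : f = g := by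
  funext x
  have := abs_le_toReal_dInfty hfin x
  rw [h] at this
  have := abs_nonneg (f x - g x)
  have : |f x - g x| = 0 := le_antisymm (by linarith) (by positivity)
  have := abs_eq_zero.1 this
  linarith

lemma rho_triangle {f g h : X → ℝ} (h1 : dInfty f g ≠ ⊤) (h2 : dInfty g h ≠ ⊤) :
    (dInfty f h).toReal ≤ (dInfty f g).toReal + (dInfty g h).toReal := by
  refine toReal_dInfty_le (by positivity) fun x => ?_
  calc |f x - h x| ≤ |f x - g x| + |g x - h x| := abs_sub_le _ _ _
    _ ≤ _ := add_le_add (abs_le_toReal_dInfty h1 x) (abs_le_toReal_dInfty h2 x)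

/-- Setting the value at `z` to `0` stays in `Pd` when `g` dominates `d · z`. -/
lemma update_z_mem (hd : IsDistance d) {g : X → ℝ} (hg : g ∈ Pd d) (z : X)
    (hz : ∀ x, d x z ≤ g x) [DecidableEq X] :
    Function.update g z 0 ∈ Pd d := by
  intro u v
  rcases eq_or_ne u z with rfl | hu
  · rcases eq_or_ne v u with rfl | hv
    · simp [Function.update_self, hd.2.2]
    · rw [Function.update_self, Function.update_of_ne hv]
      have := hz v
      rw [hd.2.1 u v]
      linarith
  · rcases eq_or_ne v z with rfl | hv
    · rw [Function.update_self, Function.update_of_ne hu]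
      have := hz u
      linarith
    · rw [Function.update_of_ne hu, Function.update_of_ne hv]
      exact hg u v

end Helpers

set_option maxHeartbeats 800000 in
lemma kappa_hyperconvex {X : Type*} (d : X → X → ℝ) (hd : IsDistance d)
    (hfin : ∀ f ∈ Td d, ∀ g ∈ Td d, dInfty f g ≠ ⊤) (z : X)
    (hkne : (kappa d z).Nonempty) :
    HyperconvexOn (fun f g : X → ℝ => (dInfty f g).toReal) (kappa d z) := by
  classical
  intro ι y hyS r hr hsep
  rcases isEmpty_or_nonempty ι with hι | hι
  · obtain ⟨f, hf⟩ := hkne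
    exact ⟨f, hf, fun α => (hι.false α).elim⟩
  have hbdd : ∀ x, BddBelow (Set.range fun α => y α x + r α) := by
    intro x
    exact ⟨0, by rintro _ ⟨α, rfl⟩; exact add_nonneg (pd_nonneg hd (hyS α).1.1 x) (hr α)⟩
  set h : X → ℝ := fun x => ⨅ α, (y α x + r α) with hh
  have hub : ∀ (α) (x), h x ≤ y α x + r α := fun α x => ciInf_le (hbdd x) α
  have hlbnd : ∀ (x) (c : ℝ), (∀ α, c ≤ y α x + r α) → c ≤ h x := fun x c hc => le_ciInf hc
  have habs : ∀ (α β) (x), |y α x - y β x| ≤ r α + r β := by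
    intro α β x
    have hf1 := hfin _ (hyS α).1 _ (hyS β).1
    exact le_trans (abs_le_toReal_dInfty hf1 x) (hsep α β)
  have hPd : h ∈ Pd d := by
    intro u v
    refine le_of_forall_pos_le_add fun ε hε => ?_
    have h2 : (0:ℝ) < ε / 2 := by linarith
    obtain ⟨α, hα⟩ := exists_lt_of_ciInf_lt
      (show (⨅ α, (y α u + r α)) < h u + ε / 2 from lt_of_le_of_lt (le_of_eq rfl) (by linarith [le_refl (h u)]))
    obtain ⟨β, hβ⟩ := exists_lt_of_ciInf_lt
      (show (⨅ α, (y α v + r α)) < h v + ε / 2 from lt_of_le_of_lt (le_of_eq rfl) (by linarith [le_refl (h v)]))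
    have hd1 : d u v ≤ y α u + y α v := (hyS α).1.1 u v
    have habs1 := (abs_le.1 (habs α β v)).2
    linarith
  have hdz : ∀ x, d x z ≤ h x := by
    intro x
    refine hlbnd x _ fun α => ?_
    have h1 : d x z ≤ y α x + y α z := (hyS α).1.1 x z
    have h2 : y α z = 0 := (hyS α).2
    have := hr α
    linarith
  have hh0 : ∀ x, 0 ≤ h x := fun x =>
    hlbnd x 0 fun α => add_nonneg (pd_nonneg hd (hyS α).1.1 x) (hr α)
  have hupd := update_z_mem hd hPd z hdz
  obtain ⟨m, hmTd, hmle⟩ := exists_td_le hd hupd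
  have hmz : m z = 0 := by
    refine le_antisymm ?_ (pd_nonneg hd hmTd.1 z)
    have := hmle z
    rwa [Function.update_self] at this
  have hmh : ∀ x, m x ≤ h x := by
    intro x
    rcases eq_or_ne x z with rfl | hx
    · rw [hmz]; exact hh0 x
    · have := hmle x
      rwa [Function.update_of_ne hx] at this
  have hup : ∀ (α) (x), m x ≤ y α x + r α := fun α x => le_trans (hmh x) (hub α x)
  have hdown : ∀ (α) (x), y α x ≤ m x + r α := by
    intro α x
    refine le_of_forall_pos_le_add fun ε hε => ?_
    obtain ⟨y0, hy0⟩ := td_eps hd (hyS α).1 x hε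
    have h1 : d x y0 ≤ m x + m y0 := hmTd.1 x y0
    have h2 := hup α y0
    have h3 := pd_nonneg hd (hyS α).1.1 y0
    linarith
  refine ⟨m, ⟨hmTd, hmz⟩, fun α => ?_⟩
  refine toReal_dInfty_le (hr α) fun x => abs_le.2 ⟨?_, ?_⟩
  · have := hup α x; linarith
  · have := hdown α x; linarith

set_option maxHeartbeats 1200000 in
/-- If `(T_d, d∞)` is a metric space, then for each `z ∈ X` the subspace
`(κ(z), d∞)` is nonempty, hyperconvex, complete and geodesic. -/
theorem statement7 {X : Type*} [Nonempty X] (d : X → X → ℝ)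
    (hd : IsDistance d) (hne : (Td d).Nonempty)
    (hfin : ∀ f ∈ Td d, ∀ g ∈ Td d, dInfty f g ≠ ⊤) (z : X) :
    (kappa d z).Nonempty ∧
    HyperconvexOn (fun f g : X → ℝ => (dInfty f g).toReal) (kappa d z) ∧
    CompleteOn (fun f g : X → ℝ => (dInfty f g).toReal) (kappa d z) ∧
    GeodesicOn (fun f g : X → ℝ => (dInfty f g).toReal) (kappa d z) := by
  classical
  have hfa : ∀ f ∈ kappa d z, ∀ g ∈ kappa d z, dInfty f g ≠ ⊤ :=
    fun f hf g hg => hfin f hf.1 g hg.1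
  -- Part 1 : nonemptiness of κ(z)
  have hkne : (kappa d z).Nonempty := by
    obtain ⟨f0, hf0⟩ := hne
    have hf0z : 0 ≤ f0 z := pd_nonneg hd hf0.1 z
    have hgPd : (fun x => f0 x + f0 z) ∈ Pd d := by
      intro x y
      have h1 := hf0.1 x y
      simp only
      linarith
    have hgz : ∀ x, d x z ≤ f0 x + f0 z := fun x => hf0.1 x z
    have hg' := update_z_mem hd hgPd z hgz
    obtain ⟨f, hfTd, hfle⟩ := exists_td_le hd hg'
    refine ⟨f, hfTd, le_antisymm ?_ (pd_nonneg hd hfTd.1 z)⟩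
    have := hfle z
    rwa [Function.update_self] at this
  -- Part 2 : hyperconvexity (from the auxiliary universe-polymorphic lemma)
  have hhyp := kappa_hyperconvex d hd hfin z hkne
  -- Part 3 : completeness
  have hcomp : CompleteOn (fun f g : X → ℝ => (dInfty f g).toReal) (kappa d z) := by
    intro u huS hcauchy
    have hfinu : ∀ m n, dInfty (u m) (u n) ≠ ⊤ := fun m n => hfin _ (huS m).1 _ (huS n).1
    have hcs : ∀ x : X, CauchySeq fun n => u n x := by
      intro x
      rw [Metric.cauchySeq_iff]
      intro ε hε
      obtain ⟨N, hN⟩ := hcauchy ε hε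
      refine ⟨N, fun m hm n hn => lt_of_le_of_lt ?_ (hN m hm n hn)⟩
      rw [Real.dist_eq]
      exact abs_le_toReal_dInfty (hfinu m n) x
    have hlim : ∀ x, ∃ l : ℝ, Filter.Tendsto (fun n => u n x) Filter.atTop (nhds l) :=
      fun x => cauchySeq_tendsto_of_complete (hcs x)
    choose l hl using hlim
    have hunif : ∀ ε : ℝ, 0 < ε → ∃ N, ∀ n ≥ N, ∀ x, |u n x - l x| ≤ ε := by
      intro ε hε
      obtain ⟨N, hN⟩ := hcauchy (ε / 2) (by linarith)
      refine ⟨N, fun n hn x => ?_⟩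
      have ht : Filter.Tendsto (fun m => |u n x - u m x|) Filter.atTop (nhds |u n x - l x|) :=
        (tendsto_const_nhds.sub (hl x)).abs
      have hev : ∀ᶠ m in Filter.atTop, |u n x - u m x| ≤ ε / 2 := by
        filter_upwards [Filter.eventually_ge_atTop N] with m hm
        exact le_trans (abs_le_toReal_dInfty (hfinu n m) x) (le_of_lt (hN n hn m hm))
      have := le_of_tendsto ht hev
      linarith
    have hlPd : l ∈ Pd d := by
      intro x y
      have ht : Filter.Tendsto (fun n => u n x + u n y) Filter.atTop (nhds (l x + l y)) :=
        (hl x).add (hl y)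
      exact ge_of_tendsto ht (Filter.Eventually.of_forall fun n => (huS n).1.1 x y)
    have hlz : l z = 0 := by
      have h0 := hl z
      rw [show (fun n => u n z) = (fun _ => (0:ℝ)) from funext fun n => (huS n).2] at h0
      exact tendsto_nhds_unique h0 tendsto_const_nhds
    have hlTd : l ∈ Td d := by
      refine td_of_eps hlPd ?_
      intro x ε hε
      obtain ⟨N, hN⟩ := hunif (ε / 4) (by linarith)
      obtain ⟨y0, hy0⟩ := td_eps hd (huS N).1 x (show (0:ℝ) < ε / 4 by linarith)
      have h1 := (abs_le.1 (hN N le_rfl x)).1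
      have h2 := (abs_le.1 (hN N le_rfl y0)).1
      exact ⟨y0, by linarith⟩
    refine ⟨l, ⟨hlTd, hlz⟩, ?_⟩
    intro ε hε
    obtain ⟨N, hN⟩ := hunif (ε / 2) (by linarith)
    exact ⟨N, fun n hn =>
      lt_of_le_of_lt (toReal_dInfty_le (by linarith) (hN n hn)) (by linarith)⟩
  -- Part 4 : geodesicity
  have hgeo : GeodesicOn (fun f g : X → ℝ => (dInfty f g).toReal) (kappa d z) := by
    intro a haS b hbS
    set D : ℝ := (dInfty a b).toReal with hDdef
    have hD0 : 0 ≤ D := ENNReal.toReal_nonneg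
    set C : Set (Set (ℝ × (X → ℝ))) :=
      {G | (0, a) ∈ G ∧ (D, b) ∈ G ∧ (∀ p ∈ G, p.1 ∈ Set.Icc 0 D ∧ p.2 ∈ kappa d z) ∧
        ∀ p ∈ G, ∀ q ∈ G, (dInfty p.2 q.2).toReal ≤ |p.1 - q.1|} with hCdef
    have habD : (dInfty a b).toReal = D := rfl
    have hG0 : ({(0, a), (D, b)} : Set (ℝ × (X → ℝ))) ∈ C := by
      refine ⟨Or.inl rfl, Or.inr rfl, ?_, ?_⟩
      · rintro p hp
        rcases hp with rfl | hp
        · exact ⟨⟨le_rfl, hD0⟩, haS⟩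
        · rcases hp with rfl
          exact ⟨⟨hD0, le_rfl⟩, hbS⟩
      · have key : (dInfty a b).toReal ≤ |(0:ℝ) - D| := by
          rw [zero_sub, abs_neg, abs_of_nonneg hD0]
        have key' : (dInfty b a).toReal ≤ |D - (0:ℝ)| := by
          rw [dInfty_comm, sub_zero, abs_of_nonneg hD0]
        rintro p hp q hq
        rcases hp with rfl | hp
        · rcases hq with rfl | hq
          · simp [dInfty_self]
          · rcases hq with rfl; exact key
        · rcases hp with rfl
          rcases hq with rfl | hq
          · exact key'
          · rcases hq with rfl; simp [dInfty_self]
    have hchain : ∀ c ⊆ C, IsChain (· ⊆ ·) c → c.Nonempty →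
        ∃ ub ∈ C, ∀ s ∈ c, s ⊆ ub := by
      rintro c hcs hch ⟨G1, hG1⟩
      refine ⟨⋃₀ c, ⟨⟨G1, hG1, (hcs hG1).1⟩, ⟨G1, hG1, (hcs hG1).2.1⟩, ?_, ?_⟩,
        fun s hs => Set.subset_sUnion_of_mem hs⟩
      · rintro p ⟨G, hGc, hpG⟩
        exact (hcs hGc).2.2.1 p hpG
      · rintro p ⟨G, hGc, hpG⟩ q ⟨G', hG'c, hqG'⟩
        rcases hch.total hGc hG'c with hle | hle
        · exact (hcs hG'c).2.2.2 p (hle hpG) q hqG'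
        · exact (hcs hGc).2.2.2 p hpG q (hle hqG')
    obtain ⟨M, hG0M, hM⟩ := zorn_subset_nonempty C hchain _ hG0
    have hM1 := hM.1
    obtain ⟨h0aM, hDbM, hmemM, hpairM⟩ := hM1
    have htot : ∀ t ∈ Set.Icc (0:ℝ) D, ∃ f, (t, f) ∈ M := by
      intro t ht
      by_contra hcon
      push_neg at hcon
      have hsep' : ∀ p q : ↥M, (dInfty p.1.2 q.1.2).toReal ≤ |p.1.1 - t| + |q.1.1 - t| := by
        intro p q
        calc (dInfty p.1.2 q.1.2).toReal ≤ |p.1.1 - q.1.1| := hpairM _ p.2 _ q.2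
          _ ≤ |p.1.1 - t| + |t - q.1.1| := abs_sub_le _ _ _
          _ = |p.1.1 - t| + |q.1.1 - t| := by rw [abs_sub_comm t]
      obtain ⟨w, hwS, hw⟩ := kappa_hyperconvex d hd hfin z hkne (↥M) (fun p => p.1.2)
        (fun p => (hmemM _ p.2).2) (fun p => |p.1.1 - t|) (fun p => abs_nonneg _) hsep'
      have hM' : insert (t, w) M ∈ C := by
          refine ⟨Set.mem_insert_of_mem _ h0aM, Set.mem_insert_of_mem _ hDbM, ?_, ?_⟩
          · intro p hp
            rcases Set.mem_insert_iff.1 hp with rfl | hp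
            · exact ⟨ht, hwS⟩
            · exact hmemM p hp
          · intro p hp q hq
            rcases Set.mem_insert_iff.1 hp with rfl | hp
            · rcases Set.mem_insert_iff.1 hq with rfl | hq
              · simp [dInfty_self]
              · have := hw ⟨q, hq⟩
                simp only at this
                rw [dInfty_comm]
                calc (dInfty q.2 w).toReal ≤ |q.1 - t| := this
                  _ = |t - q.1| := abs_sub_comm _ _
            · rcases Set.mem_insert_iff.1 hq with rfl | hq
              · exact hw ⟨p, hp⟩
              · exact hpairM p hp q hq
      have hsub := hM.2 hM' (Set.subset_insert _ _)
      exact hcon w (hsub (Set.mem_insert _ _))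
    have huniq : ∀ (s : ℝ) (f f' : X → ℝ), (s, f) ∈ M → (s, f') ∈ M → f = f' := by
      intro s f f' h1 h2
      have hle := hpairM _ h1 _ h2
      simp only [sub_self, abs_zero] at hle
      exact eq_of_dInfty_zero (hfa _ (hmemM _ h1).2 _ (hmemM _ h2).2)
        (le_antisymm hle ENNReal.toReal_nonneg)
    set g : ℝ → (X → ℝ) := fun t => if hex : ∃ f, (t, f) ∈ M then hex.choose else a with hgdef
    have hgM : ∀ t ∈ Set.Icc (0:ℝ) D, (t, g t) ∈ M := by
      intro t ht
      have hex : ∃ f, (t, f) ∈ M := htot t ht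
      simp only [hgdef, dif_pos hex]
      exact hex.choose_spec
    have hgmem : ∀ t ∈ Set.Icc (0:ℝ) D, g t ∈ kappa d z :=
      fun t ht => (hmemM _ (hgM t ht)).2
    have hg0 : g 0 = a := huniq 0 _ _ (hgM 0 ⟨le_rfl, hD0⟩) h0aM
    have hgD : g D = b := huniq D _ _ (hgM D ⟨hD0, le_rfl⟩) hDbM
    have hlip : ∀ s ∈ Set.Icc (0:ℝ) D, ∀ t ∈ Set.Icc (0:ℝ) D,
        (dInfty (g s) (g t)).toReal ≤ |s - t| := by
      intro s hs t ht
      exact hpairM _ (hgM s hs) _ (hgM t ht)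
    have hgeq : ∀ s ∈ Set.Icc (0:ℝ) D, ∀ t ∈ Set.Icc (0:ℝ) D, s ≤ t →
        (dInfty (g s) (g t)).toReal = t - s := by
      intro s hs t ht hst
      have h1 : (dInfty a (g s)).toReal ≤ s := by
        have := hpairM _ h0aM _ (hgM s hs)
        simpa [abs_of_nonneg hs.1] using this
      have h2 : (dInfty (g t) b).toReal ≤ D - t := by
        have := hpairM _ (hgM t ht) _ hDbM
        rw [abs_sub_comm, abs_of_nonneg (by linarith [ht.2] : (0:ℝ) ≤ D - t)] at this
        exact this
      have h3 : (dInfty (g s) (g t)).toReal ≤ t - s := by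
        have := hlip s hs t ht
        rwa [abs_sub_comm, abs_of_nonneg (by linarith : (0:ℝ) ≤ t - s)] at this
      have hfin1 : dInfty a (g s) ≠ ⊤ := hfa _ haS _ (hgmem s hs)
      have hfin2 : dInfty (g s) (g t) ≠ ⊤ := hfa _ (hgmem s hs) _ (hgmem t ht)
      have hfin3 : dInfty (g t) b ≠ ⊤ := hfa _ (hgmem t ht) _ hbS
      have hfin4 : dInfty (g s) b ≠ ⊤ := hfa _ (hgmem s hs) _ hbS
      have tri1 : (dInfty a b).toReal ≤ (dInfty a (g s)).toReal + (dInfty (g s) b).toReal :=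
        rho_triangle hfin1 hfin4
      have tri2 : (dInfty (g s) b).toReal ≤
          (dInfty (g s) (g t)).toReal + (dInfty (g t) b).toReal :=
        rho_triangle hfin2 hfin3
      have hDle : D ≤ (dInfty a (g s)).toReal + (dInfty (g s) (g t)).toReal
          + (dInfty (g t) b).toReal := by
        rw [← habD]; linarith
      linarith
    refine ⟨g, hg0, ?_, hgmem, ?_⟩
    · simpa [← hDdef] using hgD
    · intro s hs t ht
      simp only [← hDdef] at hs ht
      show (dInfty (g s) (g t)).toReal = |s - t|
      rcases le_total s t with h | h
      · rw [abs_sub_comm, abs_of_nonneg (by linarith : (0:ℝ) ≤ t - s)]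
        exact hgeq s hs t ht h
      · rw [abs_of_nonneg (by linarith : (0:ℝ) ≤ s - t), dInfty_comm]
        exact hgeq t ht s hs h
  exact ⟨hkne, hhyp, hcomp, hgeo⟩
end

section
/- Let (X,d) be a distance space such that (T_d,d∞) is a metric space (T_d is non-empty and d∞(f,g) < ∞ for all f,g ∈ T_d), and let ρ be a minimal element of M(d) with respect to ⪯. Then there is an isometric embedding from the metric tight span (T_ρ,d∞) of (X,ρ) into (T_d,d∞). -/
open scoped ENNReal

section Aux

variable {X : Type*}

lemma Pd_nonneg' {d : X → X → ℝ} (hdd : ∀ x, d x x = 0) {f : X → ℝ} (hf : f ∈ Pd d) (z : X) :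
    0 ≤ f z := by
  have := hf z z
  rw [hdd] at this; linarith

lemma le_of_forall_eps' {a b : ℝ} (h : ∀ ε : ℝ, 0 < ε → a ≤ b + ε) : a ≤ b := by
  by_contra hc
  push_neg at hc
  have := h ((a - b) / 2) (by linarith)
  linarith

/-- ε-characterization of minimal elements of `P_d`. -/
lemma eps_char {d : X → X → ℝ} (hsym : ∀ x y, d x y = d y x) (hdd : ∀ x, d x x = 0)
    {f : X → ℝ} (hf : f ∈ Td d) (z : X) {ε : ℝ} (hε : 0 < ε) :
    ∃ w, f z + f w ≤ d z w + ε := by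
  classical
  by_contra hc
  push_neg at hc
  have hfz : 0 ≤ f z := Pd_nonneg' hdd hf.1 z
  set f' : X → ℝ := fun w => if w = z then max (f z - ε) 0 else f w with hf'def
  have hf'P : f' ∈ Pd d := by
    intro x y
    simp only [hf'def]
    by_cases hx : x = z <;> by_cases hy : y = z
    · rw [if_pos hx, if_pos hy, hx, hy, hdd]
      have : (0:ℝ) ≤ max (f z - ε) 0 := le_max_right _ _
      linarith
    · rw [if_pos hx, if_neg hy, hx]
      have h1 := hc y
      have h2 : f z - ε ≤ max (f z - ε) 0 := le_max_left _ _
      linarith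
    · rw [if_neg hx, if_pos hy, hy]
      have h1 := hc x
      have h2 : d x z = d z x := hsym x z
      have h3 : f z - ε ≤ max (f z - ε) 0 := le_max_left _ _
      linarith
    · rw [if_neg hx, if_neg hy]
      exact hf.1 x y
  have hle : f' ≤ f := by
    intro w
    by_cases hw : w = z
    · subst hw
      simp only [hf'def, if_pos rfl]
      exact max_le (by linarith) hfz
    · simp only [hf'def, if_neg hw]; exact le_rfl
  have heq := hf.2 f' hf'P hle
  have h0 : max (f z - ε) 0 = f z := by
    have := congrFun heq z
    simpa [hf'def] using this
  have hfz0 : f z = 0 := by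
    rcases max_cases (f z - ε) 0 with ⟨h1, _⟩ | ⟨h1, _⟩
    · rw [h0] at h1; linarith
    · rw [h1] at h0; exact h0.symm
  have := hc z
  rw [hdd, hfz0] at this
  linarith

/-- 1-Lipschitz property of minimal elements over a pseudometric. -/
lemma Td_lip {ρ : X → X → ℝ} (hsym : ∀ x y, ρ x y = ρ y x) (hdd : ∀ x, ρ x x = 0)
    (htri : ∀ x y z, ρ x z ≤ ρ x y + ρ y z)
    {f : X → ℝ} (hf : f ∈ Td ρ) (z w : X) : f z ≤ f w + ρ z w := by
  apply le_of_forall_eps'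
  intro ε hε
  obtain ⟨u, hu⟩ := eps_char hsym hdd hf z hε
  have h1 := htri z w u
  have h2 := hf.1 w u
  linarith

/-- Zorn's lemma for minimal elements. -/
lemma zorn_min_s11 {β : Type*} [PartialOrder β] (S : Set β)
    (h : ∀ c ⊆ S, IsChain (· ≤ ·) c → ∃ lb ∈ S, ∀ z ∈ c, lb ≤ z) :
    ∃ m ∈ S, ∀ z ∈ S, z ≤ m → z = m := by
  obtain ⟨m, hm⟩ := zorn_le₀ (α := βᵒᵈ) (OrderDual.ofDual ⁻¹' S) (by
    intro c hc hchain
    obtain ⟨lb, hlbS, hlb⟩ := h (OrderDual.ofDual '' c)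
      (by rintro x ⟨y, hy, rfl⟩; exact hc hy)
      (by
        rintro x ⟨p, hp, rfl⟩ y ⟨q, hq, rfl⟩ hxy
        rcases hchain hp hq (fun hpq => hxy (by rw [hpq])) with h1 | h1
        · exact Or.inr h1
        · exact Or.inl h1)
    exact ⟨OrderDual.toDual lb, hlbS, fun z hz => hlb (OrderDual.ofDual z) ⟨z, hz, rfl⟩⟩)
  refine ⟨OrderDual.ofDual m, hm.1, fun z hz hzm => ?_⟩
  exact le_antisymm hzm (hm.2 (show OrderDual.toDual z ∈ _ from hz) hzm)

/-- Key Zorn construction: a compatible family of tight-span elements below a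
given Lipschitz-compatible family. -/
lemma family_tight [Nonempty X] (d : X → X → ℝ) (hdd : ∀ x, d x x = 0)
    {I : Type*} (N : I → I → ℝ) (hN0 : ∀ i, N i i = 0)
    (hNtri : ∀ i j k, N i j ≤ N i k + N j k)
    (h0 : I → X → ℝ) (hP : ∀ i, h0 i ∈ Pd d)
    (hLip : ∀ i j z, h0 i z ≤ h0 j z + N i j) :
    ∃ g : I → X → ℝ, (∀ i, g i ∈ Td d) ∧ (∀ i z, g i z ≤ h0 i z) ∧
      ∀ i j z, g i z ≤ g j z + N i j := by
  have hNnn : ∀ i j, 0 ≤ N i j := by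
    intro i j
    have := hNtri i i j
    rw [hN0] at this
    linarith
  set S : Set (I → X → ℝ) :=
    {H | (∀ i, H i ∈ Pd d) ∧ (∀ i z, H i z ≤ h0 i z) ∧ ∀ i j z, H i z ≤ H j z + N i j} with hS
  obtain ⟨M, hMS, hMmin⟩ := zorn_min_s11 S (by
    intro c hc hchain
    rcases c.eq_empty_or_nonempty with rfl | ⟨H₀, hH₀⟩
    · exact ⟨h0, ⟨hP, fun i z => le_rfl, hLip⟩, by simp⟩
    · set G : I → X → ℝ := fun i z => sInf ((fun H => H i z) '' c) with hG
      have hne : ∀ i z, ((fun H => H i z) '' c).Nonempty := fun i z => ⟨H₀ i z, ⟨H₀, hH₀, rfl⟩⟩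
      have hbdd : ∀ i z, BddBelow ((fun H => H i z) '' c) := by
        intro i z
        refine ⟨0, ?_⟩
        rintro a ⟨H, hH, rfl⟩
        exact Pd_nonneg' hdd ((hc hH).1 i) z
      have hGle : ∀ H ∈ c, ∀ i z, G i z ≤ H i z := by
        intro H hH i z
        exact csInf_le (hbdd i z) ⟨H, hH, rfl⟩
      refine ⟨G, ⟨?_, ?_, ?_⟩, ?_⟩
      · intro i x y
        apply le_of_forall_eps'
        intro ε hε
        obtain ⟨a, ⟨H1, hH1, rfl⟩, ha⟩ := exists_lt_of_csInf_lt (hne i x)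
          (show sInf ((fun H => H i x) '' c) < G i x + ε / 2 by
            have e : sInf ((fun H => H i x) '' c) = G i x := rfl
            linarith)
        obtain ⟨b, ⟨H2, hH2, rfl⟩, hb⟩ := exists_lt_of_csInf_lt (hne i y)
          (show sInf ((fun H => H i y) '' c) < G i y + ε / 2 by
            have e : sInf ((fun H => H i y) '' c) = G i y := rfl
            linarith)
        rcases hchain.total hH1 hH2 with h12 | h21
        · have := (hc hH1).1 i x y
          have h2 := h12 i y
          linarith
        · have := (hc hH2).1 i x y
          have h2 := h21 i x
          linarith
      · intro i z
        exact le_trans (hGle H₀ hH₀ i z) ((hc hH₀).2.1 i z)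
      · intro i j z
        have : G i z - N i j ≤ G j z := by
          apply le_csInf (hne j z)
          rintro b ⟨H, hH, rfl⟩
          have h1 := hGle H hH i z
          have h2 := (hc hH).2.2 i j z
          linarith
        linarith
      · intro H hH i z
        exact hGle H hH i z)
  refine ⟨M, ?_, hMS.2.1, hMS.2.2⟩
  intro i
  refine ⟨hMS.1 i, ?_⟩
  intro u huP hule
  set H' : I → X → ℝ := fun j z => min (M j z) (u z + N i j) with hH'
  have hH'S : H' ∈ S := by
    refine ⟨?_, ?_, ?_⟩
    · intro j x y
      have p1 := (hMS.1 j) x y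
      have p2 := huP x y
      have p3 : u x ≤ M i x := hule x
      have p4 : u y ≤ M i y := hule y
      have p5 := hMS.2.2 i j x
      have p6 := hMS.2.2 i j y
      have p7 := hNnn i j
      rcases min_cases (M j x) (u x + N i j) with ⟨e1, -⟩ | ⟨e1, -⟩ <;>
        rcases min_cases (M j y) (u y + N i j) with ⟨e2, -⟩ | ⟨e2, -⟩ <;>
        simp only [hH', e1, e2] <;> linarith
    · intro j z
      exact le_trans (min_le_left _ _) (hMS.2.1 j z)
    · intro j k z
      have e : min (M k z) (u z + N i k) + N j k
          = min (M k z + N j k) (u z + N i k + N j k) := by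
        rw [min_add_add_right]
      simp only [hH', e]
      apply le_min
      · exact le_trans (min_le_left _ _) (hMS.2.2 j k z)
      · have := hNtri i j k
        have h2 : u z + N i j ≤ u z + N i k + N j k := by linarith
        exact le_trans (min_le_right _ _) h2
  have hH'le : H' ≤ M := fun j z => min_le_left _ _
  have heq := hMmin H' hH'S hH'le
  funext z
  have := congrFun (congrFun heq i) z
  simp only [hH', hN0, add_zero] at this
  have h1 : min (M i z) (u z) = M i z := this
  have h2 : M i z ≤ u z := by
    rcases min_cases (M i z) (u z) with ⟨e, h⟩ | ⟨e, h⟩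
    · exact h
    · rw [e] at h1; linarith [hule z]
  exact le_antisymm (hule z) h2

end Aux

/-- If `(T_d, d∞)` is a metric space and `ρ` is minimal in `M(d)`, then the
metric tight span `(T_ρ, d∞)` embeds isometrically into `(T_d, d∞)`. -/
theorem statement11 {X : Type*} [Nonempty X] (d : X → X → ℝ)
    (hd : IsDistance d) (hne : (Td d).Nonempty)
    (hfin : ∀ f ∈ Td d, ∀ g ∈ Td d, dInfty f g ≠ ⊤)
    (ρ : X → X → ℝ) (hρ : ρ ∈ Md d)
    (hmin : ∀ ρ' ∈ Md d, ρ' ≤ ρ → ρ' = ρ) :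
    ∃ φ : (X → ℝ) → (X → ℝ),
      (∀ f ∈ Td ρ, φ f ∈ Td d) ∧
      ∀ f ∈ Td ρ, ∀ g ∈ Td ρ, dInfty (φ f) (φ g) = dInfty f g := by
  classical
  obtain ⟨hd0, hdsym, hdd⟩ := hd
  obtain ⟨⟨hρ0, hρsym, hρd, hρtri⟩, hρdom⟩ := hρ
  -- Step 1: the family α of tight-span elements below the rows of ρ.
  obtain ⟨α, hαTd, hαle, hαLip⟩ := family_tight d hdd (N := ρ) hρd
    (fun i j k => by
      have h1 := hρtri i k j
      have h2 := hρsym k j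
      linarith)
    (fun a z => ρ a z)
    (fun a x y => by
      show d x y ≤ ρ a x + ρ a y
      have h1 := hρdom x y
      have h2 := hρtri x a y
      have h3 := hρsym x a
      linarith)
    (fun a b z => by
      show ρ a z ≤ ρ b z + ρ a b
      have := hρtri a b z
      linarith)
  have hαabs : ∀ a b z, |α a z - α b z| ≤ ρ a b := by
    intro a b z
    rw [abs_sub_le_iff]
    constructor
    · have := hαLip a b z; linarith
    · have h1 := hαLip b a z
      have h2 := hρsym b a
      linarith
  -- Step 2: minimality of ρ forces ρ a b ≤ any uniform bound on |α a - α b|.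
  have hlow : ∀ a b s, 0 ≤ s → (∀ z, |α a z - α b z| ≤ s) → ρ a b ≤ s := by
    intro a b s hs habs
    set ρ' : X → X → ℝ := fun x y =>
      min (ρ x y) (min (ρ x a + s + ρ b y) (ρ x b + s + ρ a y)) with hρ'
    have hle1 : ∀ x y, ρ' x y ≤ ρ x y := fun x y => min_le_left _ _
    have hle2 : ∀ x y, ρ' x y ≤ ρ x a + s + ρ b y :=
      fun x y => le_trans (min_le_right _ _) (min_le_left _ _)
    have hle3 : ∀ x y, ρ' x y ≤ ρ x b + s + ρ a y :=
      fun x y => le_trans (min_le_right _ _) (min_le_right _ _)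
    have h0' : ∀ x y, 0 ≤ ρ' x y := by
      intro x y
      refine le_min (hρ0 x y) (le_min ?_ ?_)
      · have := hρ0 x a; have := hρ0 b y; linarith
      · have := hρ0 x b; have := hρ0 a y; linarith
    have hρ'M : ρ' ∈ Md d := by
      constructor
      · refine ⟨h0', ?_, ?_, ?_⟩
        · intro x y
          have e2 : ρ x a + s + ρ b y = ρ y b + s + ρ a x := by
            rw [hρsym x a, hρsym b y]; ring
          have e3 : ρ x b + s + ρ a y = ρ y a + s + ρ b x := by
            rw [hρsym x b, hρsym a y]; ring
          simp only [hρ', hρsym x y, e2, e3]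
          rw [min_comm (ρ y b + s + ρ a x) (ρ y a + s + ρ b x)]
        · intro x
          refine le_antisymm ?_ (h0' x x)
          have := hle1 x x
          rw [hρd x] at this
          exact this
        · intro x y z
          have L1 := hle1 x z
          have L2 := hle2 x z
          have L3 := hle3 x z
          have key : ∀ u v : ℝ,
              (u = ρ x y ∨ u = ρ x a + s + ρ b y ∨ u = ρ x b + s + ρ a y) →
              (v = ρ y z ∨ v = ρ y a + s + ρ b z ∨ v = ρ y b + s + ρ a z) →
              ρ' x z ≤ u + v := by
            rintro u v (rfl | rfl | rfl) (rfl | rfl | rfl) <;>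
              linarith [hρtri x y z, hρtri b y z, hρtri x y a, hρtri x a z,
                hρtri x b z, hρtri a y z, hρtri x y b, hρ0 b y, hρ0 a y,
                hρ0 y a, hρ0 y b, hρsym y a, hρsym y b, hρsym b y, hρ0 y z, hρ0 x y]
          have d1 : ρ' x y = ρ x y ∨ ρ' x y = ρ x a + s + ρ b y ∨
              ρ' x y = ρ x b + s + ρ a y := by
            rcases min_cases (ρ x y) (min (ρ x a + s + ρ b y) (ρ x b + s + ρ a y)) with
              ⟨e, -⟩ | ⟨e, -⟩
            · exact Or.inl e
            · rcases min_cases (ρ x a + s + ρ b y) (ρ x b + s + ρ a y) with ⟨e', -⟩ | ⟨e', -⟩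
              · exact Or.inr (Or.inl (by rw [← e']; exact e))
              · exact Or.inr (Or.inr (by rw [← e']; exact e))
          have d2 : ρ' y z = ρ y z ∨ ρ' y z = ρ y a + s + ρ b z ∨
              ρ' y z = ρ y b + s + ρ a z := by
            rcases min_cases (ρ y z) (min (ρ y a + s + ρ b z) (ρ y b + s + ρ a z)) with
              ⟨e, -⟩ | ⟨e, -⟩
            · exact Or.inl e
            · rcases min_cases (ρ y a + s + ρ b z) (ρ y b + s + ρ a z) with ⟨e', -⟩ | ⟨e', -⟩
              · exact Or.inr (Or.inl (by rw [← e']; exact e))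
              · exact Or.inr (Or.inr (by rw [← e']; exact e))
          exact key (ρ' x y) (ρ' y z) d1 d2
      · intro x y
        refine le_min (hρdom x y) (le_min ?_ ?_)
        · have p1 := (hαTd a).1 x y
          have p2 := (abs_le.mp (habs y)).2
          have p3 := hαle a x
          have p4 := hαle b y
          have e1 := hρsym x a
          linarith
        · have p1 := (hαTd b).1 x y
          have p2 := (abs_le.mp (habs y)).1
          have p3 := hαle b x
          have p4 := hαle a y
          have e1 := hρsym x b
          linarith
    have heq := hmin ρ' hρ'M (fun x y => hle1 x y)
    have : ρ a b = ρ' a b := (congrFun (congrFun heq a) b).symm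
    have h2 := hle2 a b
    rw [hρd a, hρd b] at h2
    linarith
  -- Step 3: basic facts about elements of `Td ρ`.
  have hTρ0 : ∀ {f : X → ℝ}, f ∈ Td ρ → ∀ z, 0 ≤ f z := fun hf z => Pd_nonneg' hρd hf.1 z
  have hTρlip : ∀ {f : X → ℝ}, f ∈ Td ρ → ∀ z w, f z ≤ f w + ρ z w :=
    fun hf z w => Td_lip hρsym hρd hρtri hf z w
  set T := {f : X → ℝ // f ∈ Td ρ} with hT
  have w₀ : X := Classical.arbitrary X
  set N : T → T → ℝ := fun f g => sSup (Set.range fun z => |f.1 z - g.1 z|) with hN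
  have habsbd : ∀ (f g : T) (z : X), |f.1 z - g.1 z| ≤ f.1 w₀ + g.1 w₀ := by
    intro f g z
    rw [abs_sub_le_iff]
    constructor
    · have h1 := hTρlip f.2 z w₀
      have h2 := g.2.1 z w₀
      linarith
    · have h1 := hTρlip g.2 z w₀
      have h2 := f.2.1 z w₀
      linarith
  have hNbdd : ∀ f g : T, BddAbove (Set.range fun z => |f.1 z - g.1 z|) := by
    intro f g
    exact ⟨f.1 w₀ + g.1 w₀, by rintro x ⟨z, rfl⟩; exact habsbd f g z⟩
  have hNne : ∀ f g : T, (Set.range fun z => |f.1 z - g.1 z|).Nonempty :=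
    fun f g => Set.range_nonempty _
  have hNabs : ∀ (f g : T) (z : X), |f.1 z - g.1 z| ≤ N f g :=
    fun f g z => le_csSup (hNbdd f g) ⟨z, rfl⟩
  have hNsymm : ∀ f g : T, N f g = N g f := by
    intro f g
    have h1 : (fun z => |f.1 z - g.1 z|) = fun z => |g.1 z - f.1 z| :=
      funext fun z => abs_sub_comm _ _
    simp only [hN, h1]
  have hN0 : ∀ f : T, N f f = 0 := by
    intro f
    have h1 : (fun z => |f.1 z - f.1 z|) = fun _ : X => (0 : ℝ) := funext fun z => by simp
    simp only [hN, h1, Set.range_const, csSup_singleton]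
  have hNtri : ∀ f g k : T, N f g ≤ N f k + N g k := by
    intro f g k
    apply csSup_le (hNne f g)
    rintro x ⟨z, rfl⟩
    show |f.1 z - g.1 z| ≤ N f k + N g k
    have h1 := hNabs f k z
    have h2 := hNabs g k z
    have h3 := abs_sub_le (f.1 z) (k.1 z) (g.1 z)
    have h4 : |k.1 z - g.1 z| = |g.1 z - k.1 z| := abs_sub_comm _ _
    linarith
  -- Step 4: the family over `Td ρ`.
  set h0fam : T → X → ℝ := fun f z => sInf (Set.range fun x => α x z + f.1 x) with hh0
  have hbddB : ∀ (f : T) (z : X), BddBelow (Set.range fun x => α x z + f.1 x) := by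
    intro f z
    refine ⟨α w₀ z - f.1 w₀, ?_⟩
    rintro v ⟨x, rfl⟩
    show α w₀ z - f.1 w₀ ≤ α x z + f.1 x
    have h1 := hαLip w₀ x z
    have h2 := f.2.1 w₀ x
    linarith
  have h0le : ∀ (f : T) (z x : X), h0fam f z ≤ α x z + f.1 x :=
    fun f z x => csInf_le (hbddB f z) ⟨x, rfl⟩
  have h0P : ∀ f : T, h0fam f ∈ Pd d := by
    intro f z w
    apply le_of_forall_eps'
    intro ε hε
    obtain ⟨v, ⟨x, rfl⟩, hx⟩ := exists_lt_of_csInf_lt (Set.range_nonempty _)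
      (show sInf (Set.range fun x => α x z + f.1 x) < h0fam f z + ε / 2 by
        have e : sInf (Set.range fun x => α x z + f.1 x) = h0fam f z := rfl
        linarith)
    obtain ⟨v, ⟨y, rfl⟩, hy⟩ := exists_lt_of_csInf_lt (Set.range_nonempty _)
      (show sInf (Set.range fun x => α x w + f.1 x) < h0fam f w + ε / 2 by
        have e : sInf (Set.range fun x => α x w + f.1 x) = h0fam f w := rfl
        linarith)
    have hx' : α x z + f.1 x < h0fam f z + ε / 2 := hx
    have hy' : α y w + f.1 y < h0fam f w + ε / 2 := hy
    have p1 := (hαTd x).1 z w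
    have p2 := hαLip x y w
    have p3 := f.2.1 x y
    linarith
  have h0lip : ∀ (f g : T) (z : X), h0fam f z ≤ h0fam g z + N f g := by
    intro f g z
    have h2 : h0fam f z - N f g ≤ h0fam g z := by
      apply le_csInf (Set.range_nonempty _)
      rintro v ⟨x, rfl⟩
      show h0fam f z - N f g ≤ α x z + g.1 x
      have h1 := h0le f z x
      have h3 := (abs_le.mp (hNabs f g x)).2
      linarith
    linarith
  obtain ⟨Φ, hΦTd, hΦle, hΦLip⟩ := family_tight d hdd (I := T) N hN0 hNtri h0fam h0P h0lip
  -- Step 5: bridge facts.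
  have hΦα : ∀ (f : T) (x u : X), |Φ f u - α x u| ≤ f.1 x := by
    intro f x u
    rw [abs_sub_le_iff]
    constructor
    · have h1 := hΦle f u
      have h2 := h0le f u x
      linarith
    · apply le_of_forall_eps'
      intro ε hε
      obtain ⟨w, hw⟩ := eps_char hdsym hdd (hαTd x) u hε
      have h1 := (hΦTd f).1 u w
      have h2 := hΦle f w
      have h3 := h0le f w x
      linarith
  have hkey : ∀ (p q : T) (s : ℝ), 0 ≤ s → (∀ u, |Φ p u - Φ q u| ≤ s) →
      ∀ z, p.1 z - q.1 z ≤ s := by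
    intro p q s hs habs z
    apply le_of_forall_eps'
    intro ε hε
    obtain ⟨w, hw⟩ := eps_char hρsym hρd p.2 z hε
    have hb : ρ z w ≤ q.1 z + s + p.1 w := by
      refine hlow z w (q.1 z + s + p.1 w) ?_ ?_
      · have := hTρ0 q.2 z; have := hTρ0 p.2 w; linarith
      · intro u
        have h1 : |α z u - Φ q u| ≤ q.1 z := by rw [abs_sub_comm]; exact hΦα q z u
        have h2 : |Φ q u - Φ p u| ≤ s := by rw [abs_sub_comm]; exact habs u
        have h3 : |Φ p u - α w u| ≤ p.1 w := hΦα p w u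
        calc |α z u - α w u| ≤ |α z u - Φ q u| + |Φ q u - α w u| := abs_sub_le _ _ _
          _ ≤ |α z u - Φ q u| + (|Φ q u - Φ p u| + |Φ p u - α w u|) := by
              have := abs_sub_le (Φ q u) (Φ p u) (α w u); linarith
          _ ≤ q.1 z + s + p.1 w := by linarith
    linarith
  -- Step 6: conclusion.
  have hdef : ∀ p q : X → ℝ, dInfty p q = ⨆ y, edist (p y) (q y) := fun p q => rfl
  refine ⟨fun f => if h : f ∈ Td ρ then Φ ⟨f, h⟩ else f, ?_, ?_⟩
  · intro f hf
    simp only [dif_pos hf]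
    exact hΦTd ⟨f, hf⟩
  · intro f hf g hg
    simp only [dif_pos hf, dif_pos hg]
    set fT : T := ⟨f, hf⟩ with hfT
    set gT : T := ⟨g, hg⟩ with hgT
    have efT : ∀ z, fT.1 z = f z := fun z => rfl
    have egT : ∀ z, gT.1 z = g z := fun z => rfl
    have hFGabs : ∀ u, |Φ fT u - Φ gT u| ≤ N fT gT := by
      intro u
      rw [abs_sub_le_iff]
      refine ⟨by have := hΦLip fT gT u; linarith, ?_⟩
      have h1 := hΦLip gT fT u
      have h2 := hNsymm fT gT
      linarith
    apply le_antisymm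
    · rw [hdef, hdef]
      apply ENNReal.le_of_forall_pos_le_add
      intro ε hε hlt
      have hε' : (0 : ℝ) < ε := by exact_mod_cast hε
      obtain ⟨v, ⟨z, rfl⟩, hz⟩ := exists_lt_of_lt_csSup (hNne fT gT)
        (show N fT gT - ε < sSup (Set.range fun z => |fT.1 z - gT.1 z|) by
          have e : sSup (Set.range fun z => |fT.1 z - gT.1 z|) = N fT gT := rfl
          linarith)
      have hz' : N fT gT - (ε : ℝ) < |fT.1 z - gT.1 z| := hz
      refine iSup_le fun u => ?_
      have h1 : |Φ fT u - Φ gT u| ≤ |fT.1 z - gT.1 z| + ε := by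
        have := hFGabs u; linarith
      have h2 : |fT.1 z - gT.1 z| = |f z - g z| := by rw [efT, egT]
      rw [h2] at h1
      calc edist (Φ fT u) (Φ gT u) = ENNReal.ofReal |Φ fT u - Φ gT u| := by
            rw [edist_dist, Real.dist_eq]
        _ ≤ ENNReal.ofReal (|f z - g z| + (ε : ℝ)) := ENNReal.ofReal_le_ofReal h1
        _ = ENNReal.ofReal |f z - g z| + ENNReal.ofReal (ε : ℝ) :=
            ENNReal.ofReal_add (abs_nonneg _) (le_of_lt hε')
        _ ≤ (⨆ y, edist (f y) (g y)) + ↑ε := by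
            apply add_le_add
            · have h3 : edist (f z) (g z) = ENNReal.ofReal |f z - g z| := by
                rw [edist_dist, Real.dist_eq]
              rw [← h3]
              exact le_iSup (fun y => edist (f y) (g y)) z
            · rw [ENNReal.ofReal_coe_nnreal]
    · by_cases hD : dInfty (Φ fT) (Φ gT) = ⊤
      · rw [hD]; exact le_top
      · have hsabs : ∀ u, |Φ fT u - Φ gT u| ≤ (dInfty (Φ fT) (Φ gT)).toReal := by
          intro u
          have h1 : edist (Φ fT u) (Φ gT u) ≤ dInfty (Φ fT) (Φ gT) := by
            rw [hdef]
            exact le_iSup (fun y => edist (Φ fT y) (Φ gT y)) u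
          rw [edist_dist, Real.dist_eq] at h1
          exact (ENNReal.ofReal_le_iff_le_toReal hD).mp h1
        have hs0 : (0 : ℝ) ≤ (dInfty (Φ fT) (Φ gT)).toReal := ENNReal.toReal_nonneg
        rw [hdef f g]
        refine iSup_le fun z => ?_
        have h1 : |f z - g z| ≤ (dInfty (Φ fT) (Φ gT)).toReal := by
          rw [abs_sub_le_iff]
          constructor
          · have := hkey fT gT _ hs0 hsabs z
            rw [efT, egT] at this
            exact this
          · have := hkey gT fT _ hs0 (fun u => by rw [abs_sub_comm]; exact hsabs u) z
            rw [efT, egT] at this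
            exact this
        calc edist (f z) (g z) = ENNReal.ofReal |f z - g z| := by rw [edist_dist, Real.dist_eq]
          _ ≤ ENNReal.ofReal (dInfty (Φ fT) (Φ gT)).toReal := ENNReal.ofReal_le_ofReal h1
          _ = dInfty (Φ fT) (Φ gT) := ENNReal.ofReal_toReal hD
end
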